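/- Log-det/trace inequality underlying the Gaussian covariance M-step: let Σ and S be n × n real matrices that are both symmetric positive definite. Then Real.log (Matrix.det Σ) + Matrix.trace (Σ⁻¹ * S) ≥ Real.log (Matrix.det S) + n. -/

import Mathlib

open Matrix
open scoped MatrixOrder

/-- Log-det/trace inequality underlying the Gaussian covariance M-step. -/
theorem logdet_trace_inequality (n : ℕ)
    (Sg S : Matrix (Fin n) (Fin n) ℝ) (hSg : Sg.PosDef) (hS : S.PosDef) :
    Real.log (Matrix.det Sg) + Matrix.trace (Sg⁻¹ * S) ≥
      Real.log (Matrix.det S) + n := by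
  have hQ : (Sg⁻¹).PosDef := hSg.inv
  set C := CFC.sqrt (Sg⁻¹) with hCdef
  have hCps : C.PosSemidef := Matrix.nonneg_iff_posSemidef.mp (CFC.sqrt_nonneg _)
  have hCherm : Cᴴ = C := hCps.1
  have hCC : C * C = Sg⁻¹ := CFC.sqrt_mul_sqrt_self _ hQ.posSemidef.nonneg
  -- determinant facts
  have hdetSg : (0:ℝ) < Sg.det := hSg.det_pos
  have hdetS : (0:ℝ) < S.det := hS.det_pos
  have hdetQ : (0:ℝ) < (Sg⁻¹).det := hQ.det_pos
  have hdetC2 : C.det * C.det = (Sg⁻¹).det := by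
    rw [← Matrix.det_mul, hCC]
  have hdetCne : C.det ≠ 0 := by
    intro h
    rw [h, mul_zero] at hdetC2
    exact hdetQ.ne hdetC2
  have hCunit : IsUnit C := (Matrix.isUnit_iff_isUnit_det C).mpr (isUnit_iff_ne_zero.mpr hdetCne)
  have hCinj : Function.Injective (C.mulVec) := Matrix.mulVec_injective_iff_isUnit.mpr hCunit
  -- B = C * S * C is positive definite
  set B := C * S * C with hBdef
  have hB : B.PosDef := by
    rw [Matrix.posDef_iff_dotProduct_mulVec]
    constructor
    · show Bᴴ = B
      rw [hBdef, Matrix.conjTranspose_mul, Matrix.conjTranspose_mul, hCherm, hS.1.eq]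
      rw [mul_assoc]
    · intro x hx
      have hCx : C.mulVec x ≠ 0 := by
        intro h
        apply hx
        apply hCinj
        rw [h, Matrix.mulVec_zero]
      have := hS.dotProduct_mulVec_pos hCx
      calc (0:ℝ) < dotProduct (star (C.mulVec x)) (S.mulVec (C.mulVec x)) := this
        _ = dotProduct (star x) (B.mulVec x) := by
            rw [hBdef, ← Matrix.mulVec_mulVec, ← Matrix.mulVec_mulVec,
              Matrix.star_mulVec, hCherm, ← dotProduct_mulVec]
  have hBh : B.IsHermitian := hB.1
  have hμpos : ∀ i, 0 < hBh.eigenvalues i := hB.eigenvalues_pos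
  -- trace relation
  have htr1 : Matrix.trace (Sg⁻¹ * S) = Matrix.trace B := by
    rw [← hCC, mul_assoc C C S, Matrix.trace_mul_comm, hBdef]
  have htr2 : Matrix.trace B = ∑ i, hBh.eigenvalues i := by
    exact hBh.trace_eq_sum_eigenvalues
  -- determinant relations
  have hdetB : B.det = Sg.det⁻¹ * S.det := by
    rw [hBdef, Matrix.det_mul, Matrix.det_mul]
    rw [show C.det * S.det * C.det = (C.det * C.det) * S.det by ring, hdetC2,
      Matrix.det_nonsing_inv, Ring.inverse_eq_inv']
  have hdetB2 : B.det = ∏ i, hBh.eigenvalues i := by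
    have := hBh.det_eq_prod_eigenvalues
    simpa using this
  have hμne : ∀ i ∈ Finset.univ, hBh.eigenvalues i ≠ 0 := fun i _ => (hμpos i).ne'
  have hlogdetB : Real.log B.det = ∑ i, Real.log (hBh.eigenvalues i) := by
    rw [hdetB2, Real.log_prod hμne]
  have hlogdetB' : Real.log B.det = Real.log S.det - Real.log Sg.det := by
    rw [hdetB, Real.log_mul (by positivity) hdetS.ne', Real.log_inv]
    ring
  -- key inequality
  have hkey : ∑ i, Real.log (hBh.eigenvalues i) ≤ (∑ i, hBh.eigenvalues i) - n := by
    calc ∑ i, Real.log (hBh.eigenvalues i)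
        ≤ ∑ i, (hBh.eigenvalues i - 1) :=
          Finset.sum_le_sum fun i _ => Real.log_le_sub_one_of_pos (hμpos i)
      _ = (∑ i, hBh.eigenvalues i) - n := by
          rw [Finset.sum_sub_distrib]
          simp
  have : Real.log S.det - Real.log Sg.det ≤ Matrix.trace B - n := by
    rw [← hlogdetB', hlogdetB, ← htr2] at *
    exact hkey
  rw [ge_iff_le, htr1]
  linarith
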